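/- arXiv:1909.10345 — 6 statements merged into one kernel-verified Lean document; each statement's English description precedes it below -/
import Mathlib

section
/- If w lies in the image of the unit circle under the Laurent polynomial p(z) = Σ_{k=-m}^n a_k z^k (with a_{-m} a_n ≠ 0), then the polynomials g(z) = z^m (p(z) - w) and g*(z) = z^n · conj(p(1/conj(z)) - w) (where the conjugate is applied to the coefficients) have a common complex root, and hence their resultant vanishes at w. -/
open Finset

/-- If `w` lies in the image of the unit circle under the Laurent polynomial
`p(z) = ∑_{k=-m}^n a_k z^k` with `a_{-m} a_n ≠ 0`, then the polynomials
`g(z) = z^m (p(z) - w)` and `g*(z) = z^n conj(p(1/conj z) - w)` have a common root. -/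
theorem stmt_0 (m n : ℕ) (hn : 1 ≤ n) (a : ℤ → ℂ)
    (ha : a (-(m : ℤ)) * a (n : ℤ) ≠ 0) (w : ℂ)
    (hw : ∃ z : ℂ, ‖z‖ = 1 ∧
      (∑ k ∈ Finset.Icc (-(m : ℤ)) (n : ℤ), a k * z ^ k) = w) :
    ∃ z : ℂ,
      ((∑ k ∈ Finset.Icc (-(m : ℤ)) (n : ℤ), a k * z ^ (k + (m : ℤ)).toNat)
          - w * z ^ m = 0) ∧
      ((∑ k ∈ Finset.Icc (-(m : ℤ)) (n : ℤ), (starRingEnd ℂ) (a k) * z ^ ((n : ℤ) - k).toNat)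
          - (starRingEnd ℂ) w * z ^ n = 0) := by
  obtain ⟨z, hz1, hzp⟩ := hw
  have hz0 : z ≠ 0 := by
    intro h; rw [h] at hz1; simp at hz1
  refine ⟨z, ?_, ?_⟩
  · have h1 : ∀ k ∈ Finset.Icc (-(m : ℤ)) (n : ℤ),
        a k * z ^ (k + (m : ℤ)).toNat = (a k * z ^ k) * z ^ m := by
      intro k hk
      rw [Finset.mem_Icc] at hk
      have hnn : (0:ℤ) ≤ k + m := by linarith [hk.1]
      rw [← zpow_natCast z (k + (m : ℤ)).toNat, Int.toNat_of_nonneg hnn,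
        zpow_add₀ hz0, zpow_natCast]
      ring
    rw [Finset.sum_congr rfl h1, ← Finset.sum_mul, hzp]
    ring
  · have hinv : (starRingEnd ℂ) z = z⁻¹ := by
      rw [Complex.inv_def]
      simp [Complex.normSq_eq_norm_sq, hz1]
    have h2 : ∀ k ∈ Finset.Icc (-(m : ℤ)) (n : ℤ),
        (starRingEnd ℂ) (a k) * z ^ ((n : ℤ) - k).toNat
          = (starRingEnd ℂ) (a k * z ^ k) * z ^ n := by
      intro k hk
      rw [Finset.mem_Icc] at hk
      have hnn : (0:ℤ) ≤ (n : ℤ) - k := by linarith [hk.2]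
      rw [← zpow_natCast z ((n : ℤ) - k).toNat, Int.toNat_of_nonneg hnn,
        map_mul, map_zpow₀, hinv, sub_eq_add_neg, zpow_add₀ hz0, zpow_natCast,
        zpow_neg, inv_zpow]
      ring
    rw [Finset.sum_congr rfl h2, ← Finset.sum_mul, ← map_sum, hzp]
    simp [sub_self]
end

section
/- The image of the unit circle under a Laurent polynomial p is contained in the zero set of a nonzero real polynomial in two real variables; namely there exists a nonzero h ∈ ℝ[x,y] such that for every z with |z| = 1, h(Re p(z), Im p(z)) = 0. -/
open Finset MvPolynomial

noncomputable section Stmt2Aux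

abbrev Circ := {z : ℂ // ‖z‖ = 1}

lemma circ_ne (z : Circ) : (z : ℂ) ≠ 0 := by
  intro h
  have := z.2
  rw [h] at this
  simp at this

/-- Generators: constants `1` or `I` times `z ^ k` for `|k| ≤ K`. -/
def G (K : ℕ) : Fin (2 * K + 1) × Bool → (Circ → ℂ) :=
  fun t z => (if t.2 then Complex.I else 1) * (z : ℂ) ^ ((t.1 : ℤ) - K)

def W (K : ℕ) : Submodule ℝ (Circ → ℂ) := Submodule.span ℝ (Set.range (G K))

lemma czpow_mem {K : ℕ} (a : ℂ) {k : ℤ} (hk : |k| ≤ (K : ℤ)) :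
    (fun z : Circ => a * (z : ℂ) ^ k) ∈ W K := by
  rw [abs_le] at hk
  have hk2 : (k + K).toNat < 2 * K + 1 := by omega
  set t : Fin (2 * K + 1) := ⟨(k + K).toNat, hk2⟩ with ht
  have hkt : (t : ℤ) - K = k := by
    have := Int.toNat_of_nonneg (show (0:ℤ) ≤ k + K by omega)
    simp only [ht]
    omega
  have h1 : (fun z : Circ => (z : ℂ) ^ k) ∈ W K := by
    have hmem := Submodule.subset_span (R := ℝ) (Set.mem_range_self (f := G K) (t, false))
    have heq : G K (t, false) = fun z : Circ => (z : ℂ) ^ k := by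
      funext z
      simp [G, hkt]
    rwa [heq] at hmem
  have h2 : (fun z : Circ => Complex.I * (z : ℂ) ^ k) ∈ W K := by
    have hmem := Submodule.subset_span (R := ℝ) (Set.mem_range_self (f := G K) (t, true))
    have heq : G K (t, true) = fun z : Circ => Complex.I * (z : ℂ) ^ k := by
      funext z
      simp [G, hkt]
    rwa [heq] at hmem
  have heq : (fun z : Circ => a * (z : ℂ) ^ k)
      = a.re • (fun z : Circ => (z : ℂ) ^ k)
        + a.im • (fun z : Circ => Complex.I * (z : ℂ) ^ k) := by
    funext z
    simp only [Pi.add_apply, Pi.smul_apply, Complex.real_smul]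
    linear_combination ((z : ℂ) ^ k) * (Complex.re_add_im a).symm
  rw [heq]
  exact Submodule.add_mem _ (Submodule.smul_mem _ _ h1) (Submodule.smul_mem _ _ h2)

lemma W_mono {K K' : ℕ} (h : K ≤ K') : W K ≤ W K' := by
  apply Submodule.span_le.mpr
  rintro f ⟨t, rfl⟩
  have hb : |(t.1 : ℤ) - K| ≤ (K' : ℤ) := by
    have := t.1.2
    rw [abs_le]
    omega
  exact czpow_mem _ hb

lemma gen_mul_mem {K1 K2 : ℕ} (t : Fin (2 * K1 + 1) × Bool) {g : Circ → ℂ}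
    (hg : g ∈ W K2) : G K1 t * g ∈ W (K1 + K2) := by
  induction hg using Submodule.span_induction with
  | mem y hy =>
    obtain ⟨s, rfl⟩ := hy
    have h2 : G K1 t * G K2 s = fun z : Circ =>
        ((if t.2 then Complex.I else 1) * (if s.2 then Complex.I else 1))
          * (z : ℂ) ^ (((t.1 : ℤ) - K1) + ((s.1 : ℤ) - K2)) := by
      funext z
      simp only [Pi.mul_apply, G, zpow_add₀ (circ_ne z)]
      ring
    rw [h2]
    refine czpow_mem _ ?_
    have h1 := t.1.2
    have h2 := s.1.2
    rw [abs_le]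
    omega
  | zero => simpa using (W (K1 + K2)).zero_mem
  | add y1 y2 hy1 hy2 ih1 ih2 =>
    have : G K1 t * (y1 + y2) = G K1 t * y1 + G K1 t * y2 := by ring
    rw [this]; exact Submodule.add_mem _ ih1 ih2
  | smul r y hy ih =>
    have : G K1 t * (r • y) = r • (G K1 t * y) := by
      funext z; simp [Complex.real_smul]; ring
    rw [this]; exact Submodule.smul_mem _ _ ih

lemma mul_mem_W {K1 K2 : ℕ} {f g : Circ → ℂ} (hf : f ∈ W K1) (hg : g ∈ W K2) :
    f * g ∈ W (K1 + K2) := by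
  induction hf using Submodule.span_induction with
  | mem x hx =>
    obtain ⟨t, rfl⟩ := hx
    exact gen_mul_mem t hg
  | zero => simpa using (W (K1 + K2)).zero_mem
  | add y1 y2 hy1 hy2 ih1 ih2 =>
    have : (y1 + y2) * g = y1 * g + y2 * g := by ring
    rw [this]; exact Submodule.add_mem _ ih1 ih2
  | smul r y hy ih =>
    have : (r • y) * g = r • (y * g) := by
      funext z; simp [Complex.real_smul]; ring
    rw [this]; exact Submodule.smul_mem _ _ ih

lemma pow_mem_W {K : ℕ} {f : Circ → ℂ} (hf : f ∈ W K) (i : ℕ) : f ^ i ∈ W (i * K) := by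
  induction i with
  | zero =>
    have h1 : (f ^ 0 : Circ → ℂ) = fun z : Circ => (1 : ℂ) * (z : ℂ) ^ (0 : ℤ) := by
      funext z; simp
    rw [h1]
    exact W_mono (Nat.zero_le _) (czpow_mem 1 (by simp))
  | succ i ih =>
    have h1 : f ^ (i + 1) = f ^ i * f := by ring
    rw [h1]
    have := mul_mem_W ih hf
    simpa [Nat.succ_mul] using this

lemma conj_zpow' (z : Circ) (k : ℤ) :
    (starRingEnd ℂ) ((z : ℂ) ^ k) = (z : ℂ) ^ (-k) := by
  have h1 : (z : ℂ) * (starRingEnd ℂ) (z : ℂ) = 1 := by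
    rw [Complex.mul_conj, Complex.normSq_eq_norm_sq, z.2]
    norm_num
  have h2 : (starRingEnd ℂ) (z : ℂ) = (z : ℂ)⁻¹ :=
    eq_inv_of_mul_eq_one_left (by rwa [mul_comm] at h1)
  rw [map_zpow₀, h2, inv_zpow, ← zpow_neg]

lemma ofReal_re_eq (w : ℂ) : ((w.re : ℝ) : ℂ) = (w + (starRingEnd ℂ) w) / 2 := by
  rw [Complex.add_conj]; push_cast; ring

lemma ofReal_im_eq (w : ℂ) : ((w.im : ℝ) : ℂ) = ((starRingEnd ℂ) w - w) * Complex.I / 2 := by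
  have h := Complex.sub_conj w
  push_cast at h
  have hI := Complex.I_sq
  rw [eq_div_iff (two_ne_zero)]
  linear_combination Complex.I * h + 2 * (w.im : ℂ) * hI

end Stmt2Aux

/-- The image of the unit circle under a Laurent polynomial is contained in the zero
set of a nonzero real polynomial in two variables. -/
theorem stmt_2 (m n : ℕ) (hn : 1 ≤ n) (a : ℤ → ℂ)
    (ha : a (-(m : ℤ)) * a (n : ℤ) ≠ 0) :
    ∃ h : MvPolynomial (Fin 2) ℝ, h ≠ 0 ∧
      ∀ z : ℂ, ‖z‖ = 1 →
        MvPolynomial.eval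
          ![(∑ k ∈ Finset.Icc (-(m : ℤ)) (n : ℤ), a k * z ^ k).re,
            (∑ k ∈ Finset.Icc (-(m : ℤ)) (n : ℤ), a k * z ^ k).im] h = 0 := by
  classical
  set N : ℕ := m + n with hN
  set d : ℕ := 8 * N + 2 with hd
  set K : ℕ := 2 * d * N with hK
  set P : Circ → ℂ := fun z => ∑ k ∈ Finset.Icc (-(m : ℤ)) (n : ℤ), a k * (z : ℂ) ^ k with hP
  set reF : Circ → ℂ := fun z => ((P z).re : ℂ) with hreF
  set imF : Circ → ℂ := fun z => ((P z).im : ℂ) with himF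
  have hbound : ∀ k : ℤ, k ∈ Finset.Icc (-(m : ℤ)) (n : ℤ) →
      |k| ≤ (N : ℤ) ∧ |(-k)| ≤ (N : ℤ) := by
    intro k hk
    rw [Finset.mem_Icc] at hk
    constructor <;> (rw [abs_le]; constructor <;> omega)
  -- Re p ∈ W N
  have hre : reF ∈ W N := by
    have heq : reF = ∑ k ∈ Finset.Icc (-(m : ℤ)) (n : ℤ),
        ((fun z : Circ => (a k / 2) * (z : ℂ) ^ k)
          + fun z : Circ => ((starRingEnd ℂ) (a k) / 2) * (z : ℂ) ^ (-k)) := by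
      funext z
      simp only [hreF, Finset.sum_apply, Pi.add_apply]
      rw [ofReal_re_eq, hP]
      rw [map_sum]
      rw [Finset.sum_congr rfl (fun k _ => by rw [map_mul, conj_zpow'] :
        ∀ k ∈ Finset.Icc (-(m : ℤ)) (n : ℤ), (starRingEnd ℂ) (a k * (z : ℂ) ^ k)
          = (starRingEnd ℂ) (a k) * (z : ℂ) ^ (-k))]
      rw [← Finset.sum_add_distrib, Finset.sum_div]
      exact Finset.sum_congr rfl fun k _ => by ring
    rw [heq]
    refine Submodule.sum_mem _ fun k hk => ?_
    exact Submodule.add_mem _ (czpow_mem _ (hbound k hk).1) (czpow_mem _ (hbound k hk).2)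
  -- Im p ∈ W N
  have him : imF ∈ W N := by
    have heq : imF = ∑ k ∈ Finset.Icc (-(m : ℤ)) (n : ℤ),
        ((fun z : Circ => (-(a k) * Complex.I / 2) * (z : ℂ) ^ k)
          + fun z : Circ => ((starRingEnd ℂ) (a k) * Complex.I / 2) * (z : ℂ) ^ (-k)) := by
      funext z
      simp only [himF, Finset.sum_apply, Pi.add_apply]
      rw [ofReal_im_eq, hP]
      rw [map_sum]
      rw [Finset.sum_congr rfl (fun k _ => by rw [map_mul, conj_zpow'] :
        ∀ k ∈ Finset.Icc (-(m : ℤ)) (n : ℤ), (starRingEnd ℂ) (a k * (z : ℂ) ^ k)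
          = (starRingEnd ℂ) (a k) * (z : ℂ) ^ (-k))]
      rw [← Finset.sum_sub_distrib, Finset.sum_mul, Finset.sum_div]
      exact Finset.sum_congr rfl fun k _ => by ring
    rw [heq]
    refine Submodule.sum_mem _ fun k hk => ?_
    exact Submodule.add_mem _ (czpow_mem _ (hbound k hk).1) (czpow_mem _ (hbound k hk).2)
  -- monomial products
  set v : Fin (d + 1) × Fin (d + 1) → (Circ → ℂ) :=
    fun t => reF ^ (t.1 : ℕ) * imF ^ (t.2 : ℕ) with hv
  have hprod : ∀ t, v t ∈ W K := by
    intro t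
    have h1 := mul_mem_W (pow_mem_W hre (t.1 : ℕ)) (pow_mem_W him (t.2 : ℕ))
    refine W_mono ?_ h1
    have ht1 : (t.1 : ℕ) ≤ d := Nat.lt_succ_iff.mp t.1.2
    have ht2 : (t.2 : ℕ) ≤ d := Nat.lt_succ_iff.mp t.2.2
    rw [hK]
    nlinarith
  -- linear map
  set L : ((Fin (d + 1) × Fin (d + 1)) → ℝ) →ₗ[ℝ] (Circ → ℂ) :=
    ∑ t, (LinearMap.proj t).smulRight (v t) with hLdef
  have hL : ∀ c, L c = ∑ t, c t • v t := by
    intro c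
    simp [hLdef, LinearMap.sum_apply, LinearMap.smulRight_apply]
  have hLW : ∀ c, L c ∈ W K := fun c => by
    rw [hL]
    exact Submodule.sum_mem _ fun t _ => Submodule.smul_mem _ _ (hprod t)
  haveI hfin : Module.Finite ℝ (W K) :=
    Module.Finite.span_of_finite ℝ (Set.finite_range (G K))
  have hrank : Module.finrank ℝ (W K) ≤ 2 * (2 * K + 1) := by
    have h1 := finrank_range_le_card (R := ℝ) (G K)
    rw [Set.finrank] at h1
    have h2 : Fintype.card (Fin (2 * K + 1) × Bool) = (2 * K + 1) * 2 := by simp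
    rw [h2] at h1
    rw [W]
    omega
  have hker : LinearMap.ker L ≠ ⊥ := by
    intro h0
    have hinj : Function.Injective (L.codRestrict (W K) hLW) := by
      rw [← LinearMap.ker_eq_bot, LinearMap.ker_codRestrict]
      exact h0
    have h1 := LinearMap.finrank_le_finrank_of_injective hinj
    rw [Module.finrank_fintype_fun_eq_card] at h1
    have h2 : Fintype.card (Fin (d + 1) × Fin (d + 1)) = (d + 1) * (d + 1) := by simp
    rw [h2] at h1
    have h3 := le_trans h1 hrank
    rw [hK, hd] at h3
    nlinarith
  obtain ⟨c, hcker, hc0⟩ := (Submodule.ne_bot_iff _).mp hker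
  have hLc : L c = 0 := LinearMap.mem_ker.mp hcker
  -- build polynomial
  set e : Fin (d + 1) × Fin (d + 1) → (Fin 2 →₀ ℕ) :=
    fun t => Finsupp.single 0 (t.1 : ℕ) + Finsupp.single 1 (t.2 : ℕ) with he
  have einj : Function.Injective e := by
    intro t t' h
    have h0 := DFunLike.congr_fun h (0 : Fin 2)
    have h1 := DFunLike.congr_fun h (1 : Fin 2)
    simp only [he, Finsupp.add_apply, Finsupp.single_apply] at h0 h1
    norm_num at h0 h1
    exact Prod.ext (Fin.ext h0) (Fin.ext h1)
  set h : MvPolynomial (Fin 2) ℝ :=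
    ∑ t, MvPolynomial.monomial (e t) (c t) with hh
  refine ⟨h, ?_, ?_⟩
  · intro h0
    obtain ⟨t0, ht0⟩ : ∃ t, c t ≠ 0 := by
      by_contra hcon
      push_neg at hcon
      exact hc0 (funext hcon)
    have hco := congrArg (MvPolynomial.coeff (e t0)) h0
    rw [hh, MvPolynomial.coeff_sum] at hco
    rw [Finset.sum_eq_single_of_mem t0 (Finset.mem_univ _)
      (fun t _ ht => by
        rw [MvPolynomial.coeff_monomial, if_neg (fun hc => ht (einj hc))])] at hco
    rw [MvPolynomial.coeff_monomial, if_pos rfl] at hco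
    simp at hco
    exact ht0 hco
  · intro z hz
    set ζ : Circ := ⟨z, hz⟩ with hζ
    have hLz : (L c) ζ = 0 := by rw [hLc]; rfl
    rw [hL, Finset.sum_apply] at hLz
    simp only [Pi.smul_apply] at hLz
    have hval : ((MvPolynomial.eval
        ![(∑ k ∈ Finset.Icc (-(m : ℤ)) (n : ℤ), a k * z ^ k).re,
          (∑ k ∈ Finset.Icc (-(m : ℤ)) (n : ℤ), a k * z ^ k).im] h : ℝ) : ℂ)
        = ∑ t, c t • v t ζ := by
      rw [hh]
      rw [map_sum]
      push_cast
      refine Finset.sum_congr rfl fun t _ => ?_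
      rw [MvPolynomial.eval_monomial]
      simp only [he, hv, Pi.mul_apply, Pi.pow_apply, hreF, himF]
      rw [Finsupp.prod_add_index (by simp) (by simp [pow_add])]
      rw [Finsupp.prod_single_index (by simp), Finsupp.prod_single_index (by simp)]
      push_cast
      have hPz : P ζ = ∑ k ∈ Finset.Icc (-(m : ℤ)) (n : ℤ), a k * z ^ k := rfl
      rw [hPz]
      simp [Complex.real_smul]
    rw [hLz] at hval
    exact_mod_cast hval
end

section
/- Let g and g* be monic-degree m+n polynomials with roots z_1, ..., z_{m+n} and 1/conj(z_1), ..., 1/conj(z_{m+n}) respectively (all z_j ≠ 0), with leading coefficients a_n and conj(a_{-m}). Then Res(g, g*) = (-1)^{m+n} |a_n|^{2(m+n)} ∏_{i,j=1}^{m+n} (z_i conj(z_j) - 1), and in particular Res(g, g*) is a real number. -/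
open Finset

/-- Resultant formula: with `g(z) = a_n ∏ (z - z_j)` and
`g*(z) = conj(a_{-m}) ∏ (z - 1/conj(z_j))`, where `∏ z_j = (-1)^{m+n} a_{-m}/a_n`,
the resultant `a_n^{m+n} conj(a_{-m})^{m+n} ∏_{i,j} (z_i - 1/conj(z_j))` equals
`(-1)^{m+n} |a_n|^{2(m+n)} ∏_{i,j} (z_i conj(z_j) - 1)`, and it is real. -/
theorem stmt_3 (m n : ℕ) (an am : ℂ) (han : an ≠ 0) (ham : am ≠ 0)
    (z : Fin (m + n) → ℂ) (hz : ∀ j, z j ≠ 0)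
    (hprod : ∏ j, z j = (-1) ^ (m + n) * am / an) :
    an ^ (m + n) * (starRingEnd ℂ) am ^ (m + n) *
        ∏ i, ∏ j, (z i - ((starRingEnd ℂ) (z j))⁻¹) =
      (-1 : ℂ) ^ (m + n) * (‖an‖ : ℂ) ^ (2 * (m + n)) *
        ∏ i, ∏ j, (z i * (starRingEnd ℂ) (z j) - 1) ∧
    ∃ r : ℝ,
      an ^ (m + n) * (starRingEnd ℂ) am ^ (m + n) *
        ∏ i, ∏ j, (z i - ((starRingEnd ℂ) (z j))⁻¹) = (r : ℂ) := by
  have hcz : ∀ j, (starRingEnd ℂ) (z j) ≠ 0 := fun j => by simpa using hz j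
  have hcan : (starRingEnd ℂ) an ≠ 0 := by simpa using han
  have hcam : (starRingEnd ℂ) am ≠ 0 := by simpa using ham
  set C : ℂ := ∏ j, (starRingEnd ℂ) (z j) with hCdef
  have hC : C = (-1) ^ (m + n) * (starRingEnd ℂ) am / (starRingEnd ℂ) an := by
    rw [hCdef, ← map_prod, hprod]
    simp [map_div₀]
  set P : ℂ := ∏ i, ∏ j, (z i * (starRingEnd ℂ) (z j) - 1) with hPdef
  have key : (∏ i, ∏ j, (z i - ((starRingEnd ℂ) (z j))⁻¹)) = P / C ^ (m + n) := by
    have h1 : ∀ i, ∏ j, (z i - ((starRingEnd ℂ) (z j))⁻¹)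
        = (∏ j, (z i * (starRingEnd ℂ) (z j) - 1)) / C := by
      intro i
      rw [hCdef, ← Finset.prod_div_distrib]
      refine Finset.prod_congr rfl fun j _ => ?_
      rw [eq_div_iff (hcz j), sub_mul, inv_mul_cancel₀ (hcz j)]
    calc (∏ i, ∏ j, (z i - ((starRingEnd ℂ) (z j))⁻¹))
        = ∏ i : Fin (m + n), ((∏ j, (z i * (starRingEnd ℂ) (z j) - 1)) / C) :=
          Finset.prod_congr rfl fun i _ => h1 i
      _ = P / C ^ (m + n) := by
          rw [Finset.prod_div_distrib, Finset.prod_const, Finset.card_univ]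
          simp [hPdef]
  have hsign : ((-1 : ℂ) ^ (m + n)) ^ (m + n) = (-1 : ℂ) ^ (m + n) := by
    rcases Nat.even_or_odd (m + n) with h | h
    · simp [h.neg_one_pow]
    · simp [h.neg_one_pow]
  have hCN : C ^ (m + n) =
      (-1) ^ (m + n) * (starRingEnd ℂ) am ^ (m + n) / (starRingEnd ℂ) an ^ (m + n) := by
    rw [hC, div_pow, mul_pow, hsign]
  have habs : ((‖an‖ : ℂ)) ^ (2 * (m + n))
      = an ^ (m + n) * (starRingEnd ℂ) an ^ (m + n) := by
    have h2 : ((‖an‖ : ℂ)) ^ 2 = an * (starRingEnd ℂ) an := by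
      rw [Complex.mul_conj]
      norm_cast
      exact Complex.sq_norm an
    rw [pow_mul, h2, mul_pow]
  have htwo : ∀ k : ℕ, (-1 : ℂ) ^ (k * 2) = 1 := fun k => by
    rw [pow_mul']; simp
  have main : an ^ (m + n) * (starRingEnd ℂ) am ^ (m + n) *
      ∏ i, ∏ j, (z i - ((starRingEnd ℂ) (z j))⁻¹) =
      (-1 : ℂ) ^ (m + n) * (‖an‖ : ℂ) ^ (2 * (m + n)) * P := by
    rw [key, hCN, habs]
    have h1 : (-1 : ℂ) ^ (m + n) ≠ 0 := by simp
    field_simp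
    ring_nf
    simp [htwo]
  refine ⟨main, ?_⟩
  have hP : (starRingEnd ℂ) P = P := by
    rw [hPdef]
    simp only [map_prod, map_sub, map_mul, map_one, Complex.conj_conj]
    rw [Finset.prod_comm]
    exact Finset.prod_congr rfl fun i _ => Finset.prod_congr rfl fun j _ => by ring_nf
  have hreal : (starRingEnd ℂ) ((-1 : ℂ) ^ (m + n) * (‖an‖ : ℂ) ^ (2 * (m + n)) * P)
      = (-1 : ℂ) ^ (m + n) * (‖an‖ : ℂ) ^ (2 * (m + n)) * P := by
    simp [map_mul, map_pow, hP, Complex.conj_ofReal]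
  rw [main]
  exact Complex.conj_eq_iff_real.mp hreal
end

section
/- Let F = (F₁, F₂) : ℝ² → ℝ² be a polynomial map and let H = (H₁, H₂) where H_i is the top-degree homogeneous part of F_i. If H(x) ≠ 0 for all x ∈ ℝ² \ {0}, then F is proper: |F(x)| → ∞ as |x| → ∞. -/
open MvPolynomial Filter

private lemma camp_eval_smul {σ : Type*} {φ : MvPolynomial σ ℝ} {n : ℕ}
    (hφ : φ.IsHomogeneous n) (r : ℝ) (x : σ → ℝ) :
    eval (r • x) φ = r ^ n * eval x φ := by
  rw [eval_eq, eval_eq, Finset.mul_sum]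
  refine Finset.sum_congr rfl fun m hm => ?_
  have hdeg : m.degree = n := by
    rw [Finsupp.degree_eq_weight_one]; exact hφ (MvPolynomial.mem_support_iff.mp hm)
  calc φ.coeff m * ∏ i ∈ m.support, (r • x) i ^ m i
      = φ.coeff m * ∏ i ∈ m.support, (r ^ m i * x i ^ m i) := by
        simp [Pi.smul_apply, smul_eq_mul, mul_pow]
    _ = r ^ n * (φ.coeff m * ∏ i ∈ m.support, x i ^ m i) := by
        rw [Finset.prod_mul_distrib, Finset.prod_pow_eq_pow_sum]
        rw [show (∑ i ∈ m.support, m i) = n from hdeg]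
        ring

private lemma camp_growth (P : MvPolynomial (Fin 2) ℝ) :
    ∃ C : ℝ, 0 ≤ C ∧ ∀ x : Fin 2 → ℝ, |eval x P| ≤ C * max 1 ‖x‖ ^ P.totalDegree := by
  refine ⟨∑ m ∈ P.support, |P.coeff m|, Finset.sum_nonneg fun _ _ => abs_nonneg _, fun x => ?_⟩
  have h1 : (1 : ℝ) ≤ max 1 ‖x‖ := le_max_left _ _
  rw [eval_eq, Finset.sum_mul]
  refine (Finset.abs_sum_le_sum_abs _ _).trans (Finset.sum_le_sum fun m hm => ?_)
  rw [abs_mul]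
  refine mul_le_mul_of_nonneg_left ?_ (abs_nonneg _)
  calc |∏ i ∈ m.support, x i ^ m i|
      ≤ ∏ i ∈ m.support, max 1 ‖x‖ ^ m i := by
        rw [Finset.abs_prod]
        refine Finset.prod_le_prod (fun _ _ => abs_nonneg _) fun i _ => ?_
        rw [abs_pow]
        exact pow_le_pow_left₀ (abs_nonneg _)
          ((Real.norm_eq_abs (x i) ▸ norm_le_pi_norm x i).trans (le_max_right 1 ‖x‖)) _
    _ = max 1 ‖x‖ ^ (∑ i ∈ m.support, m i) := Finset.prod_pow_eq_pow_sum _ _ _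
    _ ≤ max 1 ‖x‖ ^ P.totalDegree := pow_le_pow_right₀ h1 (le_totalDegree hm)

private lemma camp_low (F : MvPolynomial (Fin 2) ℝ) :
    (F - homogeneousComponent F.totalDegree F).totalDegree ≤ F.totalDegree - 1 := by
  apply Finset.sup_le
  intro m hm
  rw [MvPolynomial.mem_support_iff, coeff_sub, coeff_homogeneousComponent] at hm
  split_ifs at hm with h
  · simp at hm
  · rw [sub_zero] at hm
    have := le_totalDegree (MvPolynomial.mem_support_iff.mpr hm)
    have hne : (m.sum fun _ e => e) ≠ F.totalDegree := by
      exact h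
    omega

private lemma camp_min (H₁ H₂ : MvPolynomial (Fin 2) ℝ)
    (hH : ∀ x : Fin 2 → ℝ, x ≠ 0 → ¬ (eval x H₁ = 0 ∧ eval x H₂ = 0)) :
    ∃ c > (0:ℝ), ∀ u : Fin 2 → ℝ, ‖u‖ = 1 → c ≤ max |eval u H₁| |eval u H₂| := by
  have hcomp : IsCompact (Metric.sphere (0 : Fin 2 → ℝ) 1) := isCompact_sphere _ _
  have hne : (Metric.sphere (0 : Fin 2 → ℝ) 1).Nonempty :=
    NormedSpace.sphere_nonempty.mpr zero_le_one
  have hcont : Continuous fun u : Fin 2 → ℝ => max |eval u H₁| |eval u H₂| :=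
    ((MvPolynomial.continuous_eval H₁).abs).max ((MvPolynomial.continuous_eval H₂).abs)
  obtain ⟨u₀, hu₀, hmin⟩ := hcomp.exists_isMinOn hne hcont.continuousOn
  refine ⟨_, ?_, fun u hu => hmin (by simpa [Metric.mem_sphere, dist_zero_right] using hu)⟩
  have hu₀' : u₀ ≠ 0 := by
    intro h; rw [Metric.mem_sphere, dist_zero_right, h] at hu₀; simp at hu₀
  rcases (le_max_iff.mpr (Or.inl (abs_nonneg (eval u₀ H₁)))).lt_or_eq with h | h
  · exact h
  · exfalso
    apply hH u₀ hu₀'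
    have h₁ : |eval u₀ H₁| ≤ 0 := h ▸ le_max_left _ _
    have h₂ : |eval u₀ H₂| ≤ 0 := h ▸ le_max_right _ _
    exact ⟨abs_eq_zero.mp (le_antisymm h₁ (abs_nonneg _)),
      abs_eq_zero.mp (le_antisymm h₂ (abs_nonneg _))⟩

private lemma camp_one (F : MvPolynomial (Fin 2) ℝ) (hd : 1 ≤ F.totalDegree)
    {c C : ℝ} (hC0 : 0 ≤ C)
    (hG : ∀ y : Fin 2 → ℝ, |eval y (F - homogeneousComponent F.totalDegree F)|
      ≤ C * max 1 ‖y‖ ^ (F - homogeneousComponent F.totalDegree F).totalDegree)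
    {x u : Fin 2 → ℝ} (hx : 1 ≤ ‖x‖) (hxu : x = ‖x‖ • u)
    (hcu : c ≤ |eval u (homogeneousComponent F.totalDegree F)|) :
    c * ‖x‖ - C ≤ |eval x F| := by
  set d := F.totalDegree with hdd
  set H := homogeneousComponent d F with hHdef
  set r := ‖x‖ with hr
  have hr0 : (0:ℝ) < r := lt_of_lt_of_le one_pos hx
  by_cases hcr : c * r - C ≤ 0
  · exact hcr.trans (abs_nonneg _)
  push_neg at hcr
  have hH1 : r ^ d * c ≤ |eval x H| := by
    rw [hxu, camp_eval_smul (homogeneousComponent_isHomogeneous d F) r u, abs_mul,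
      abs_pow, abs_of_pos hr0]
    exact mul_le_mul_of_nonneg_left hcu (pow_nonneg hr0.le _)
  have hG1 : |eval x (F - H)| ≤ C * r ^ (d - 1) := by
    refine (hG x).trans (mul_le_mul_of_nonneg_left ?_ hC0)
    rw [max_eq_right hx]
    exact pow_le_pow_right₀ hx (camp_low F)
  have hsplit : eval x F = eval x H + eval x (F - H) := by
    rw [map_sub]; ring
  have habs : |eval x H| - |eval x (F - H)| ≤ |eval x F| := by
    rw [hsplit]
    have := abs_sub_abs_le_abs_sub (eval x H) (-(eval x (F - H)))
    rw [abs_neg, sub_neg_eq_add] at this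
    exact this
  have hpow : r ^ d = r ^ (d - 1) * r := by
    rw [← pow_succ]; congr 1; omega
  have key : r ^ (d - 1) * (c * r - C) ≤ |eval x F| := by
    calc r ^ (d - 1) * (c * r - C) = r ^ d * c - C * r ^ (d - 1) := by rw [hpow]; ring
      _ ≤ |eval x H| - |eval x (F - H)| := sub_le_sub hH1 hG1
      _ ≤ |eval x F| := habs
  calc c * r - C ≤ r ^ (d - 1) * (c * r - C) :=
        le_mul_of_one_le_left hcr.le (one_le_pow₀ hx)
    _ ≤ |eval x F| := key

/-- Campbell's lemma in the plane: if the top-degree homogeneous parts of a polynomial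
map `F = (F₁, F₂) : ℝ² → ℝ²` have no common zero away from the origin, then `F` is
proper. -/
theorem stmt_14 (F₁ F₂ : MvPolynomial (Fin 2) ℝ)
    (hd₁ : 1 ≤ F₁.totalDegree) (hd₂ : 1 ≤ F₂.totalDegree)
    (hH : ∀ x : Fin 2 → ℝ, x ≠ 0 →
      ¬ (MvPolynomial.eval x (MvPolynomial.homogeneousComponent F₁.totalDegree F₁) = 0 ∧
         MvPolynomial.eval x (MvPolynomial.homogeneousComponent F₂.totalDegree F₂) = 0)) :
    Filter.Tendsto
      (fun x : Fin 2 → ℝ => ‖(MvPolynomial.eval x F₁, MvPolynomial.eval x F₂)‖)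
      (Bornology.cobounded (Fin 2 → ℝ)) Filter.atTop := by
  set H₁ := homogeneousComponent F₁.totalDegree F₁ with hH₁
  set H₂ := homogeneousComponent F₂.totalDegree F₂ with hH₂
  obtain ⟨c, hc, hmin⟩ := camp_min H₁ H₂ hH
  obtain ⟨C₁, hC₁, hG₁⟩ := camp_growth (F₁ - H₁)
  obtain ⟨C₂, hC₂, hG₂⟩ := camp_growth (F₂ - H₂)
  set C := max C₁ C₂ with hC
  have hG₁' : ∀ y : Fin 2 → ℝ, |eval y (F₁ - H₁)|
      ≤ C * max 1 ‖y‖ ^ (F₁ - H₁).totalDegree := fun y =>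
    (hG₁ y).trans (mul_le_mul_of_nonneg_right (le_max_left _ _) (by positivity))
  have hG₂' : ∀ y : Fin 2 → ℝ, |eval y (F₂ - H₂)|
      ≤ C * max 1 ‖y‖ ^ (F₂ - H₂).totalDegree := fun y =>
    (hG₂ y).trans (mul_le_mul_of_nonneg_right (le_max_right _ _) (by positivity))
  have claim : ∀ x : Fin 2 → ℝ, 1 ≤ ‖x‖ →
      c * ‖x‖ - C ≤ ‖(eval x F₁, eval x F₂)‖ := by
    intro x hx
    have hx0 : x ≠ 0 := by
      intro h; rw [h, norm_zero] at hx; linarith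
    set u := ‖x‖⁻¹ • x with hu
    have hu1 : ‖u‖ = 1 := norm_smul_inv_norm hx0
    have hxu : x = ‖x‖ • u := by
      rw [hu, smul_inv_smul₀ (norm_ne_zero_iff.mpr hx0)]
    rcases le_max_iff.mp (hmin u hu1) with h | h
    · calc c * ‖x‖ - C ≤ |eval x F₁| := camp_one F₁ hd₁ (hC₁.trans (le_max_left _ _)) hG₁' hx hxu h
        _ = ‖(eval x F₁, eval x F₂).1‖ := (Real.norm_eq_abs _).symm
        _ ≤ ‖(eval x F₁, eval x F₂)‖ := norm_fst_le _
    · calc c * ‖x‖ - C ≤ |eval x F₂| := camp_one F₂ hd₂ (hC₂.trans (le_max_right _ _)) hG₂' hx hxu h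
        _ = ‖(eval x F₁, eval x F₂).2‖ := (Real.norm_eq_abs _).symm
        _ ≤ ‖(eval x F₁, eval x F₂)‖ := norm_snd_le _
  have hlow : Tendsto (fun x : Fin 2 → ℝ => c * ‖x‖ - C)
      (Bornology.cobounded (Fin 2 → ℝ)) atTop := by
    have h1 : Tendsto (fun x : Fin 2 → ℝ => c * ‖x‖)
        (Bornology.cobounded (Fin 2 → ℝ)) atTop :=
      (tendsto_norm_cobounded_atTop).const_mul_atTop hc
    simpa [sub_eq_add_neg] using tendsto_atTop_add_const_right _ (-C) h1
  refine tendsto_atTop_mono' _ ?_ hlow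
  filter_upwards [tendsto_norm_cobounded_atTop.eventually_ge_atTop 1] with x hx
  exact claim x hx
end

section
/- If p(𝕋) is contained in a line and p is nonconstant, then the zero set of P(z) = p(z) - p(1/conj(z)) is unbounded. -/
open Finset Complex

namespace Complex

noncomputable def abs : AbsoluteValue ℂ ℝ where
  toFun z := ‖z‖
  map_mul' := norm_mul
  nonneg' := norm_nonneg
  eq_zero' _ := norm_eq_zero
  add_le' := norm_add_le

lemma abs_conj (z : ℂ) : abs ((starRingEnd ℂ) z) = abs z := Complex.norm_conj z

lemma abs_ofReal (x : ℝ) : abs (x : ℂ) = |x| := Complex.norm_real x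

lemma abs_exp_ofReal_mul_I (x : ℝ) : abs (exp (x * I)) = 1 := Complex.norm_exp_ofReal_mul_I x

lemma abs_mul_exp_arg_mul_I (x : ℂ) : (abs x : ℂ) * exp (arg x * I) = x :=
  Complex.norm_mul_exp_arg_mul_I x

lemma normSq_eq_abs (x : ℂ) : normSq x = abs x ^ 2 := Complex.normSq_eq_norm_sq x

end Complex

private lemma aux17 (n : ℕ) (b : ℤ → ℂ) (m : ℤ) (hm1 : 1 ≤ m) (hmn : m ≤ (n:ℤ))
    (hbm : b m ≠ 0)
    (hmax : ∀ k : ℤ, m < k → k ≤ (n:ℤ) → b k = 0)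
    (hsym : ∀ k : ℤ, k ≠ 0 → -(n:ℤ) ≤ k → k ≤ (n:ℤ) → b (-k) = -(starRingEnd ℂ) (b k))
    (R : ℝ) :
    ∃ z : ℂ, z ≠ 0 ∧ R < Complex.abs z ∧
      ∑ k ∈ Finset.Icc (-(n:ℤ)) (n:ℤ), b k * (z ^ k - ((starRingEnd ℂ) z) ^ (-k)) = 0 := by
  set D : ℂ → ℂ := fun z => ∑ k ∈ Finset.Icc (-(n:ℤ)) (n:ℤ),
      b k * (z ^ k - ((starRingEnd ℂ) z) ^ (-k)) with hD
  -- reality of D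
  have hDconj : ∀ z : ℂ, (starRingEnd ℂ) (D z) = D z := by
    intro z
    rw [hD]
    rw [map_sum]
    refine Finset.sum_nbij' (fun k => -k) (fun k => -k) ?_ ?_ ?_ ?_ ?_
    · intro k hk; simp only [Finset.mem_Icc] at *; omega
    · intro k hk; simp only [Finset.mem_Icc] at *; omega
    · intro k _; ring
    · intro k _; ring
    · intro k hk
      simp only [Finset.mem_Icc] at hk
      rcases eq_or_ne k 0 with rfl | hk0
      · simp
      · have h := hsym k hk0 hk.1 hk.2
        rw [map_mul, map_sub, ← map_zpow₀ (starRingEnd ℂ), ← map_zpow₀ (starRingEnd ℂ)]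
        rw [h]
        simp [Complex.conj_conj]
        ring
  have habm : 0 < Complex.abs (b m) := Complex.abs.pos hbm
  set C : ℝ := (∑ k ∈ Finset.Icc (-(m-1)) (m-1), 2 * Complex.abs (b k))
      + 2 * Complex.abs (b m) with hC
  set r : ℝ := max R (max 1 (C / (2 * Complex.abs (b m)))) + 1 with hr
  have hmax1 : (1:ℝ) ≤ max 1 (C / (2 * Complex.abs (b m))) := le_max_left _ _
  have hmax2 : max 1 (C / (2 * Complex.abs (b m)))
      ≤ max R (max 1 (C / (2 * Complex.abs (b m)))) := le_max_right _ _
  have hmax3 : R ≤ max R (max 1 (C / (2 * Complex.abs (b m)))) := le_max_left _ _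
  have hmax4 : C / (2 * Complex.abs (b m))
      ≤ max 1 (C / (2 * Complex.abs (b m))) := le_max_right _ _
  have hr1 : 1 ≤ r := by rw [hr]; linarith
  have hr0 : (0:ℝ) < r := lt_of_lt_of_le one_pos hr1
  have hrR : R < r := by rw [hr]; linarith
  have hrC : C < 2 * Complex.abs (b m) * r := by
    have h1 : C / (2 * Complex.abs (b m)) < r := by rw [hr]; linarith
    have h2 : (0:ℝ) < 2 * Complex.abs (b m) := by linarith
    calc C = C / (2 * Complex.abs (b m)) * (2 * Complex.abs (b m)) := by
            field_simp
      _ < r * (2 * Complex.abs (b m)) := by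
            exact mul_lt_mul_of_pos_right h1 h2
      _ = 2 * Complex.abs (b m) * r := by ring
  -- estimate
  have key : ∀ z : ℂ, Complex.abs z = r →
      |(D z).re - 2 * (b m * z ^ m).re| ≤ C * r ^ (m-1) := by
    intro z hz
    have hz0 : z ≠ 0 := by
      intro h; rw [h] at hz; simp at hz; linarith
    have htr : D z
        = ∑ k ∈ Finset.Icc (-m) m, b k * (z ^ k - ((starRingEnd ℂ) z) ^ (-k)) := by
      rw [hD]
      refine (Finset.sum_subset ?_ ?_).symm
      · intro k hk; simp only [Finset.mem_Icc] at *; omega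
      · intro k hk hk'
        simp only [Finset.mem_Icc] at hk hk'
        have hbk : b k = 0 := by
          rcases lt_or_ge m k with h | h
          · exact hmax k h hk.2
          · have hk0 : k ≠ 0 := by omega
            have h1 := hsym k hk0 hk.1 hk.2
            have h2 : b (-k) = 0 := hmax (-k) (by omega) (by omega)
            rw [h2] at h1
            have : (starRingEnd ℂ) (b k) = 0 := by
              rw [← neg_eq_zero, ← h1]
            simpa using congrArg (starRingEnd ℂ) this
        rw [hbk, zero_mul]
    have hsplit : Finset.Icc (-m) m
        = Finset.Icc (-(m-1)) (m-1) ∪ ({-m, m} : Finset ℤ) := by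
      ext k; simp only [Finset.mem_Icc, Finset.mem_union, Finset.mem_insert,
        Finset.mem_singleton]; omega
    have hdisj : Disjoint (Finset.Icc (-(m-1)) (m-1)) ({-m, m} : Finset ℤ) := by
      simp only [Finset.disjoint_left, Finset.mem_Icc, Finset.mem_insert,
        Finset.mem_singleton]
      intro k hk h; rcases h with rfl | rfl <;> omega
    rw [htr, hsplit, Finset.sum_union hdisj,
      Finset.sum_pair (show (-m:ℤ) ≠ m by omega)]
    have hbnegm : b (-m) = -(starRingEnd ℂ) (b m) :=
      hsym m (by omega) (by omega) (by omega)
    rw [hbnegm]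
    set S : ℂ := ∑ k ∈ Finset.Icc (-(m-1)) (m-1), b k * (z ^ k - ((starRingEnd ℂ) z) ^ (-k))
      with hS
    have habsz : ∀ j : ℤ, Complex.abs (z ^ j) = r ^ j := by
      intro j; rw [map_zpow₀, hz]
    have habscz : ∀ j : ℤ, Complex.abs (((starRingEnd ℂ) z) ^ j) = r ^ j := by
      intro j; rw [map_zpow₀, Complex.abs_conj, hz]
    have hkey : S + (-(starRingEnd ℂ) (b m) * (z ^ (-m) - ((starRingEnd ℂ) z) ^ (-(-m)))
          + b m * (z ^ m - ((starRingEnd ℂ) z) ^ (-m)))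
        = (b m * z ^ m + (starRingEnd ℂ) (b m * z ^ m))
          + (S - (starRingEnd ℂ) (b m) * z ^ (-m) - b m * ((starRingEnd ℂ) z) ^ (-m)) := by
      rw [map_mul, ← map_zpow₀ (starRingEnd ℂ)]
      ring_nf
    rw [hkey]
    set E : ℂ := S - (starRingEnd ℂ) (b m) * z ^ (-m) - b m * ((starRingEnd ℂ) z) ^ (-m)
      with hE
    have hre : ((b m * z ^ m + (starRingEnd ℂ) (b m * z ^ m)) + E).re
        = 2 * (b m * z ^ m).re + E.re := by
      rw [Complex.add_re, Complex.add_re, Complex.conj_re]; ring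
    rw [hre]
    rw [add_comm, add_sub_assoc, sub_self, add_zero]
    have h1 : |E.re| ≤ Complex.abs E := Complex.abs_re_le_norm E
    refine le_trans h1 ?_
    have hSbound : Complex.abs S
        ≤ (∑ k ∈ Finset.Icc (-(m-1)) (m-1), 2 * Complex.abs (b k)) * r ^ (m-1) := by
      rw [hS, Finset.sum_mul]
      refine le_trans (Complex.abs.sum_le _ _) ?_
      refine Finset.sum_le_sum ?_
      intro k hk
      simp only [Finset.mem_Icc] at hk
      rw [map_mul]
      have hb1 : Complex.abs (z ^ k - ((starRingEnd ℂ) z) ^ (-k))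
          ≤ r ^ k + r ^ (-k) := by
        refine le_trans (Complex.abs.sub_le_add _ _) ?_
        rw [habsz, habscz]
      have hb2 : r ^ k + r ^ (-k) ≤ 2 * r ^ (m-1) := by
        have e1 : r ^ k ≤ r ^ (m-1) := zpow_le_zpow_right₀ hr1 (by omega)
        have e2 : r ^ (-k) ≤ r ^ (m-1) := zpow_le_zpow_right₀ hr1 (by omega)
        linarith
      calc Complex.abs (b k) * Complex.abs (z ^ k - ((starRingEnd ℂ) z) ^ (-k))
          ≤ Complex.abs (b k) * (2 * r ^ (m-1)) := by
            refine mul_le_mul_of_nonneg_left (le_trans hb1 hb2) (Complex.abs.nonneg _)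
        _ = 2 * Complex.abs (b k) * r ^ (m-1) := by ring
    have hnegm : r ^ (-m) ≤ r ^ (m-1) := zpow_le_zpow_right₀ hr1 (by omega)
    have h2 : Complex.abs E ≤ Complex.abs S + Complex.abs (b m) * r ^ (-m)
        + Complex.abs (b m) * r ^ (-m) := by
      rw [hE]
      refine le_trans (Complex.abs.sub_le_add _ _) ?_
      gcongr
      · refine le_trans (Complex.abs.sub_le_add _ _) ?_
        gcongr
        rw [map_mul, Complex.abs_conj, habsz]
      · rw [map_mul, habscz]
    have hbm0 : (0:ℝ) ≤ Complex.abs (b m) := Complex.abs.nonneg _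
    have h3 : Complex.abs (b m) * r ^ (-m) ≤ Complex.abs (b m) * r ^ (m-1) :=
      mul_le_mul_of_nonneg_left hnegm hbm0
    rw [hC, add_mul]
    nlinarith [hSbound]
  -- angles
  set w : ℂ := (starRingEnd ℂ) (b m) with hw
  have hw0 : w ≠ 0 := by
    rw [hw]
    intro h
    exact hbm (by simpa using congrArg (starRingEnd ℂ) h)
  have hmR : ((m:ℝ)) ≠ 0 := by
    have : m ≠ 0 := by omega
    exact_mod_cast this
  set θ₁ : ℝ := w.arg / (m:ℝ) with hθ₁
  set θ₂ : ℝ := (w.arg + Real.pi) / (m:ℝ) with hθ₂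
  have hmθ₁ : (m:ℝ) * θ₁ = w.arg := by rw [hθ₁]; field_simp
  have hmθ₂ : (m:ℝ) * θ₂ = w.arg + Real.pi := by rw [hθ₂]; field_simp
  have hpow : ∀ θ : ℝ, ((r:ℂ) * Complex.exp (↑θ * I)) ^ m
      = ((r ^ m : ℝ) : ℂ) * Complex.exp ((((m:ℝ) * θ : ℝ)) * I) := by
    intro θ
    rw [mul_zpow, ← Complex.ofReal_zpow]
    congr 1
    rw [← Complex.exp_int_mul]
    congr 1
    push_cast; ring
  have habsC : (Complex.abs (b m) : ℂ) ≠ 0 := by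
    exact_mod_cast (ne_of_gt habm)
  have hexparg : Complex.exp (↑w.arg * I) = (↑(Complex.abs w))⁻¹ * w := by
    have h := Complex.abs_mul_exp_arg_mul_I w
    have habs : (Complex.abs w : ℂ) ≠ 0 := by
      exact_mod_cast Complex.abs.ne_zero hw0
    field_simp [habs]
    linear_combination h
  have habsw : Complex.abs w = Complex.abs (b m) := by
    rw [hw]; exact Complex.abs_conj _
  have hmc : b m * w = ((Complex.abs (b m) : ℂ))^2 := by
    rw [hw, Complex.mul_conj, Complex.normSq_eq_abs]
    push_cast; ring
  have hval1 : b m * ((r:ℂ) * Complex.exp (↑θ₁ * I)) ^ m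
      = ((r ^ m * Complex.abs (b m) : ℝ) : ℂ) := by
    rw [hpow θ₁, hmθ₁, hexparg, habsw, Complex.ofReal_mul]
    rw [show b m * (((r ^ m : ℝ):ℂ) * ((↑(Complex.abs (b m)))⁻¹ * w))
        = ((r ^ m : ℝ):ℂ) * (↑(Complex.abs (b m)))⁻¹ * (b m * w) by ring, hmc]
    field_simp
  have hval2 : b m * ((r:ℂ) * Complex.exp (↑θ₂ * I)) ^ m
      = -((r ^ m * Complex.abs (b m) : ℝ) : ℂ) := by
    rw [hpow θ₂, hmθ₂]
    have hexp2 : Complex.exp (↑(w.arg + Real.pi) * I) = -Complex.exp (↑w.arg * I) := by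
      push_cast
      rw [add_mul, Complex.exp_add, Complex.exp_pi_mul_I]
      ring
    rw [hexp2, hexparg, habsw, Complex.ofReal_mul]
    rw [show b m * (((r ^ m : ℝ):ℂ) * -((↑(Complex.abs (b m)))⁻¹ * w))
        = -(((r ^ m : ℝ):ℂ) * (↑(Complex.abs (b m)))⁻¹ * (b m * w)) by ring, hmc]
    rw [neg_eq_iff_eq_neg, neg_neg]
    field_simp
  -- the circle path and continuity
  have hzne : ∀ θ : ℝ, (r:ℂ) * Complex.exp (↑θ * I) ≠ 0 := fun θ =>
    mul_ne_zero (by exact_mod_cast hr0.ne') (Complex.exp_ne_zero _)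
  have habs : ∀ θ : ℝ, Complex.abs ((r:ℂ) * Complex.exp (↑θ * I)) = r := by
    intro θ
    rw [map_mul, Complex.abs_exp_ofReal_mul_I, Complex.abs_ofReal, abs_of_pos hr0, mul_one]
  have hfc : Continuous fun θ : ℝ => (D ((r:ℂ) * Complex.exp (↑θ * I))).re := by
    have hzc : Continuous fun θ : ℝ => (r:ℂ) * Complex.exp (↑θ * I) :=
      continuous_const.mul ((Complex.continuous_ofReal.mul continuous_const).cexp)
    rw [hD]
    refine Complex.continuous_re.comp ?_
    refine continuous_finset_sum _ ?_
    intro k _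
    refine continuous_const.mul (Continuous.sub ?_ ?_)
    · exact hzc.zpow₀ k (fun θ => Or.inl (hzne θ))
    · refine (Complex.continuous_conj.comp hzc).zpow₀ (-k) (fun θ => Or.inl ?_)
      intro h
      exact hzne θ (by simpa using congrArg (starRingEnd ℂ) h)
  set f : ℝ → ℝ := fun θ => (D ((r:ℂ) * Complex.exp (↑θ * I))).re with hf
  have hrm : r ^ m = r ^ (m-1) * r := by
    rw [← zpow_add_one₀ hr0.ne']
    congr 1; omega
  have hpow0 : (0:ℝ) < r ^ (m-1) := zpow_pos hr0 _
  have hf1 : 0 < f θ₁ := by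
    have hk := key _ (habs θ₁)
    rw [hval1, Complex.ofReal_re, abs_le] at hk
    have := hk.1
    nlinarith [this, hrC, hpow0]
  have hf2 : f θ₂ < 0 := by
    have hk := key _ (habs θ₂)
    rw [hval2] at hk
    rw [show (-((r ^ m * Complex.abs (b m) : ℝ) : ℂ)).re
        = -(r ^ m * Complex.abs (b m)) by
          rw [Complex.neg_re, Complex.ofReal_re], abs_le] at hk
    have := hk.2
    nlinarith [this, hrC, hpow0]
  -- IVT
  have hIVT := intermediate_value_uIcc (a := θ₂) (b := θ₁) hfc.continuousOn
  have h0mem : (0:ℝ) ∈ Set.uIcc (f θ₂) (f θ₁) :=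
    Set.mem_uIcc.mpr (Or.inl ⟨le_of_lt hf2, le_of_lt hf1⟩)
  obtain ⟨θ₀, _, hθ₀⟩ := hIVT h0mem
  refine ⟨(r:ℂ) * Complex.exp (↑θ₀ * I), hzne θ₀, ?_, ?_⟩
  · rw [habs θ₀]; exact hrR
  · have him : (D ((r:ℂ) * Complex.exp (↑θ₀ * I))).im = 0 :=
      Complex.conj_eq_iff_im.mp (hDconj _)
    have hre0 : (D ((r:ℂ) * Complex.exp (↑θ₀ * I))).re = 0 := hθ₀
    have hDz : D ((r:ℂ) * Complex.exp (↑θ₀ * I)) = 0 := by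
      apply Complex.ext <;> simp [hre0, him]
    exact hDz

/-- If `p(𝕋)` is contained in a line and `p` is nonconstant, then the zero set of
`P(z) = p(z) - p(1/conj z)` is unbounded. -/
theorem stmt_17 (n : ℕ) (hn : 1 ≤ n) (a : ℤ → ℂ)
    (hnc : ∃ k : ℤ, k ≠ 0 ∧ -(n : ℤ) ≤ k ∧ k ≤ (n : ℤ) ∧ a k ≠ 0)
    (hline : ∃ η : ℂ, ‖η‖ = 1 ∧
      ∀ k : ℤ, 1 ≤ k → k ≤ (n : ℤ) → η * a k = -(starRingEnd ℂ) (η * a (-k))) :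
    ∀ R : ℝ, ∃ z : ℂ, z ≠ 0 ∧ R < ‖z‖ ∧
      (∑ k ∈ Finset.Icc (-(n : ℤ)) (n : ℤ), a k * z ^ k) =
        (∑ k ∈ Finset.Icc (-(n : ℤ)) (n : ℤ), a k * (((starRingEnd ℂ) z)⁻¹) ^ k) := by
  intro R
  obtain ⟨η, hη, hrel⟩ := hline
  have hη0 : η ≠ 0 := by
    intro h; rw [h] at hη; simp at hη
  set b : ℤ → ℂ := fun k => η * a k with hb
  -- symmetric relation
  have hsym : ∀ k : ℤ, k ≠ 0 → -(n:ℤ) ≤ k → k ≤ (n:ℤ) → b (-k) = -(starRingEnd ℂ) (b k) := by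
    intro k hk0 hkl hku
    rcases lt_or_ge 0 k with hk | hk
    · have h := hrel k (by omega) hku
      have h2 := congrArg (starRingEnd ℂ) h
      simp only [map_neg, Complex.conj_conj] at h2
      show η * a (-k) = -(starRingEnd ℂ) (η * a k)
      linear_combination h2
    · have h := hrel (-k) (by omega) (by omega)
      rw [neg_neg] at h
      exact h
  -- find maximal nonzero index
  set S : Finset ℤ := (Finset.Icc (1:ℤ) (n:ℤ)).filter (fun k => a k ≠ 0) with hSdef
  have hSne : S.Nonempty := by
    obtain ⟨k, hk0, hkl, hku, hak⟩ := hnc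
    rcases lt_or_ge 0 k with hk | hk
    · exact ⟨k, by simp [hSdef, Finset.mem_filter, Finset.mem_Icc]; exact ⟨⟨by omega, hku⟩, hak⟩⟩
    · refine ⟨-k, ?_⟩
      simp only [hSdef, Finset.mem_filter, Finset.mem_Icc]
      refine ⟨⟨by omega, by omega⟩, ?_⟩
      intro h
      have hr := hrel (-k) (by omega) (by omega)
      rw [h, mul_zero] at hr
      simp only [neg_neg] at hr
      have : η * a k = 0 := by
        have := congrArg (starRingEnd ℂ) hr
        simpa using this
      exact hak (by rcases mul_eq_zero.mp this with h' | h'; exact absurd h' hη0; exact h')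
  set m : ℤ := S.max' hSne with hm
  have hmS : m ∈ S := S.max'_mem hSne
  simp only [hSdef, Finset.mem_filter, Finset.mem_Icc] at hmS
  have hm1 : 1 ≤ m := hmS.1.1
  have hmn : m ≤ (n:ℤ) := hmS.1.2
  have ham : a m ≠ 0 := hmS.2
  have hbm : b m ≠ 0 := mul_ne_zero hη0 ham
  have hmaxb : ∀ k : ℤ, m < k → k ≤ (n:ℤ) → b k = 0 := by
    intro k hk hkn
    have hak : a k = 0 := by
      by_contra hak
      have hkS : k ∈ S := by
        simp only [hSdef, Finset.mem_filter, Finset.mem_Icc]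
        exact ⟨⟨by omega, hkn⟩, hak⟩
      have := S.le_max' k hkS
      omega
    rw [hb]; simp [hak]
  obtain ⟨z, hz0, hzR, hzsum⟩ := aux17 n b m hm1 hmn hbm hmaxb hsym R
  refine ⟨z, hz0, hzR, ?_⟩
  -- convert
  have hconv : ∀ k : ℤ, (((starRingEnd ℂ) z)⁻¹) ^ k = ((starRingEnd ℂ) z) ^ (-k) := by
    intro k
    rw [inv_zpow, ← zpow_neg]
  have hsum2 : ∑ k ∈ Finset.Icc (-(n:ℤ)) (n:ℤ), b k * z ^ k
      = ∑ k ∈ Finset.Icc (-(n:ℤ)) (n:ℤ), b k * ((starRingEnd ℂ) z) ^ (-k) := by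
    rw [← sub_eq_zero, ← Finset.sum_sub_distrib]
    rw [← hzsum]
    congr 1; ext k; ring
  apply mul_left_cancel₀ hη0
  rw [Finset.mul_sum, Finset.mul_sum]
  calc ∑ k ∈ Finset.Icc (-(n:ℤ)) (n:ℤ), η * (a k * z ^ k)
      = ∑ k ∈ Finset.Icc (-(n:ℤ)) (n:ℤ), b k * z ^ k := by
        apply Finset.sum_congr rfl; intro k _; rw [hb]; ring
    _ = ∑ k ∈ Finset.Icc (-(n:ℤ)) (n:ℤ), b k * ((starRingEnd ℂ) z) ^ (-k) := hsum2
    _ = ∑ k ∈ Finset.Icc (-(n:ℤ)) (n:ℤ), η * (a k * (((starRingEnd ℂ) z)⁻¹) ^ k) := by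
        apply Finset.sum_congr rfl; intro k _; rw [hb, hconv]; ring
end

section
/- For each N ≥ 1 there exist distinct points a_1, ..., a_N with 0 < |a_k| < 1 and a polynomial p such that p(a_k) = p(1/conj(a_k)) = k for k = 1, ..., N and |p(z)| > N for all |z| = 1. Consequently the set E = {z ≠ 0 : p(z) = p(1/conj(z))} satisfies {1, ..., N} ⊆ p(E) \ p(𝕋). -/
open Polynomial

/-- For each `N ≥ 1` there are distinct points `a_1, ..., a_N` in the punctured unit
disk and a polynomial `p` with `p(a_k) = p(1/conj(a_k)) = k` and `|p| > N` on the unit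
circle; consequently `{1, ..., N} ⊆ p(E) \ p(𝕋)` where
`E = {z ≠ 0 : p(z) = p(1/conj z)}`. -/
theorem stmt_18 (N : ℕ) (hN : 1 ≤ N) :
    ∃ (a : Fin N → ℂ) (p : Polynomial ℂ),
      Function.Injective a ∧
      (∀ k : Fin N, 0 < ‖a k‖ ∧ ‖a k‖ < 1) ∧
      (∀ k : Fin N,
        Polynomial.eval (a k) p = ((k : ℕ) + 1 : ℂ) ∧
        Polynomial.eval (((starRingEnd ℂ) (a k))⁻¹) p = ((k : ℕ) + 1 : ℂ)) ∧
      (∀ z : ℂ, ‖z‖ = 1 → (N : ℝ) < ‖Polynomial.eval z p‖) ∧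
      (∀ k : Fin N,
        (∃ z : ℂ, z ≠ 0 ∧
          Polynomial.eval z p = Polynomial.eval (((starRingEnd ℂ) z)⁻¹) p ∧
          Polynomial.eval z p = ((k : ℕ) + 1 : ℂ)) ∧
        ¬ ∃ z : ℂ, ‖z‖ = 1 ∧ Polynomial.eval z p = ((k : ℕ) + 1 : ℂ)) := by
  classical
  -- real node values
  set w : Fin N × Bool → ℝ := fun i => if i.2 then (i.1 : ℝ) + 2 else ((i.1 : ℝ) + 2)⁻¹
    with hw
  have hbase : ∀ k : Fin N, (2:ℝ) ≤ (k : ℝ) + 2 := by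
    intro k
    have : (0:ℝ) ≤ (k : ℝ) := Nat.cast_nonneg _
    linarith
  have hpos : ∀ i, 0 < w i := by
    rintro ⟨k, b⟩
    have := hbase k
    cases b <;> simp only [hw, if_true, Bool.false_eq_true, if_false] <;>
      [exact inv_pos.mpr (by linarith); linarith]
  have hne1 : ∀ i, w i ≠ 1 := by
    rintro ⟨k, b⟩
    have h2 := hbase k
    have h0 : (0:ℝ) < (k : ℝ) + 2 := by linarith
    cases b <;> simp only [hw, if_true, Bool.false_eq_true, if_false] <;> intro h
    · have : ((k : ℝ) + 2) = 1 := by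
        field_simp at h; linarith
      linarith
    · linarith
  have hwinj : Function.Injective w := by
    rintro ⟨k, b⟩ ⟨k', b'⟩ h
    have h2 := hbase k
    have h2' := hbase k'
    have hk0 : (0:ℝ) < (k : ℝ) + 2 := by linarith
    have hk0' : (0:ℝ) < (k' : ℝ) + 2 := by linarith
    have hkinv : ((k : ℝ) + 2)⁻¹ ≤ 1 := by
      rw [inv_le_one_iff₀]; right; linarith
    have hkinv' : ((k' : ℝ) + 2)⁻¹ ≤ 1 := by
      rw [inv_le_one_iff₀]; right; linarith
    have hkk : ∀ (a b : Fin N), (a : ℝ) + 2 = (b : ℝ) + 2 → a = b := by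
      intro a b hab
      have : (a : ℕ) = (b : ℕ) := by exact_mod_cast (by linarith : (a:ℝ) = (b:ℝ))
      exact Fin.val_injective this
    cases b <;> cases b' <;> simp only [hw, if_true, Bool.false_eq_true, if_false] at h
    · exact Prod.ext (hkk k k' (inv_injective h)) rfl
    · exfalso; rw [← h] at h2'; linarith
    · exfalso; rw [h] at h2; linarith
    · exact Prod.ext (hkk k k' h) rfl
  set v : Fin N × Bool → ℂ := fun i => ((w i : ℝ) : ℂ) with hv
  have hvinj : Function.Injective v := fun i j h =>
    hwinj (Complex.ofReal_injective h)
  have habsv : ∀ i, ‖v i‖ = w i := by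
    intro i; rw [hv]; simp [Complex.norm_real, abs_of_pos (hpos i)]
  -- interpolating polynomial
  set q : Polynomial ℂ := Lagrange.interpolate Finset.univ v
      (fun i => ((i.1 : ℕ) + 1 : ℂ)) with hq
  have hqnode : ∀ i : Fin N × Bool, Polynomial.eval (v i) q = ((i.1 : ℕ) + 1 : ℂ) := by
    intro i
    exact Lagrange.eval_interpolate_at_node _ (hvinj.injOn) (Finset.mem_univ i)
  -- vanishing polynomial
  set rp : Polynomial ℂ := ∏ i : Fin N × Bool, (X - C (v i)) with hrp
  have hrnode : ∀ i : Fin N × Bool, Polynomial.eval (v i) rp = 0 := by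
    intro i
    rw [hrp, Polynomial.eval_prod]
    exact Finset.prod_eq_zero (Finset.mem_univ i) (by simp)
  have hrne : ∀ z : ℂ, ‖z‖ = 1 → Polynomial.eval z rp ≠ 0 := by
    intro z hz
    rw [hrp, Polynomial.eval_prod]
    rw [Finset.prod_ne_zero_iff]
    intro i _
    simp only [Polynomial.eval_sub, Polynomial.eval_X, Polynomial.eval_C, sub_ne_zero]
    intro h
    apply hne1 i
    rw [← habsv i, ← h, hz]
  -- compactness on the circle
  set S : Set ℂ := Metric.sphere (0:ℂ) 1 with hS
  have hScompact : IsCompact S := isCompact_sphere _ _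
  have hSne : S.Nonempty := ⟨1, by simp [hS]⟩
  have hmemS : ∀ z : ℂ, ‖z‖ = 1 → z ∈ S := by
    intro z hz
    simp [hS, Metric.mem_sphere, dist_zero_right, hz]
  have hcontr : Continuous fun z : ℂ => ‖Polynomial.eval z rp‖ :=
    continuous_norm.comp rp.continuous
  have hcontq : Continuous fun z : ℂ => ‖Polynomial.eval z q‖ :=
    continuous_norm.comp q.continuous
  obtain ⟨z₀, hz₀S, hz₀min⟩ := hScompact.exists_isMinOn hSne hcontr.continuousOn
  obtain ⟨z₁, hz₁S, hz₁max⟩ := hScompact.exists_isMaxOn hSne hcontq.continuousOn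
  set c : ℝ := ‖Polynomial.eval z₀ rp‖ with hc
  set Q : ℝ := ‖Polynomial.eval z₁ q‖ with hQ
  have hcpos : 0 < c := by
    rw [hc]
    have : Polynomial.eval z₀ rp ≠ 0 := by
      apply hrne
      have := hz₀S
      simpa [hS, Metric.mem_sphere, dist_zero_right] using this
    simpa using this
  have hQ0 : 0 ≤ Q := by positivity
  set M : ℝ := ((N : ℝ) + Q + 1) / c with hM
  have hM0 : 0 ≤ M := by
    apply div_nonneg _ hcpos.le
    positivity
  have hMc : M * c = (N : ℝ) + Q + 1 := div_mul_cancel₀ _ hcpos.ne'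
  set p : Polynomial ℂ := q + C (M : ℂ) * rp with hp
  have hpnode : ∀ i : Fin N × Bool, Polynomial.eval (v i) p = ((i.1 : ℕ) + 1 : ℂ) := by
    intro i
    rw [hp]
    simp [hrnode i, hqnode i]
  have hcircle : ∀ z : ℂ, ‖z‖ = 1 →
      (N : ℝ) < ‖Polynomial.eval z p‖ := by
    intro z hz
    have hzS := hmemS z hz
    have h1 : ‖(M:ℂ) * Polynomial.eval z rp‖
        ≤ ‖Polynomial.eval z p‖ + ‖Polynomial.eval z q‖ := by
      have heq : (M:ℂ) * Polynomial.eval z rp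
          = Polynomial.eval z p - Polynomial.eval z q := by
        rw [hp]; simp
      rw [heq]
      simpa using norm_sub_le (Polynomial.eval z p) (Polynomial.eval z q)
    have h2 : ‖(M:ℂ) * Polynomial.eval z rp‖
        = M * ‖Polynomial.eval z rp‖ := by
      rw [norm_mul]
      congr 1
      simp [Complex.norm_real, abs_of_nonneg hM0]
    have h3 : c ≤ ‖Polynomial.eval z rp‖ := hz₀min hzS
    have h4 : ‖Polynomial.eval z q‖ ≤ Q := hz₁max hzS
    have h5 : M * c ≤ M * ‖Polynomial.eval z rp‖ :=
      mul_le_mul_of_nonneg_left h3 hM0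
    rw [h2] at h1
    linarith [hMc ▸ h5]
  refine ⟨fun k => v (k, false), p, ?_, ?_, ?_, hcircle, ?_⟩
  · intro k k' h
    have := hvinj h
    exact (Prod.ext_iff.mp this).1
  · intro k
    rw [habsv]
    constructor
    · exact hpos _
    · simp only [hw, if_neg Bool.false_ne_true]
      have := hbase k
      rw [inv_lt_one_iff₀]; right; linarith
  · intro k
    have h2 := hbase k
    have hk0 : (0:ℝ) < (k : ℝ) + 2 := by linarith
    have hwf : w (k, false) = ((k : ℝ) + 2)⁻¹ := by simp [hw, if_true, Bool.false_eq_true, if_false]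
    have hwt : w (k, true) = (k : ℝ) + 2 := by simp [hw, if_true, Bool.false_eq_true, if_false]
    refine ⟨hpnode (k, false), ?_⟩
    have hconj : ((starRingEnd ℂ) (v (k, false)))⁻¹ = v (k, true) := by
      rw [hv]
      simp only [Complex.conj_ofReal]
      rw [← Complex.ofReal_inv, hwf, hwt, inv_inv]
    rw [hconj]
    exact hpnode (k, true)
  · intro k
    constructor
    · refine ⟨v (k, false), ?_, ?_, hpnode (k, false)⟩
      · intro h
        have := habsv (k, false)
        rw [h] at this
        simp at this
        exact (hpos (k, false)).ne' this.symm
      · have h2 := hbase k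
        have hk0 : (0:ℝ) < (k : ℝ) + 2 := by linarith
        have hconj : ((starRingEnd ℂ) (v (k, false)))⁻¹ = v (k, true) := by
          rw [hv]
          simp only [Complex.conj_ofReal]
          rw [← Complex.ofReal_inv]
          congr 1
          simp [hw, if_true, Bool.false_eq_true, if_false]
        rw [hconj, hpnode (k, false), hpnode (k, true)]
    · rintro ⟨z, hz1, hzp⟩
      have := hcircle z hz1
      rw [hzp] at this
      have habs : ‖((k : ℕ) : ℂ) + 1‖ = (k : ℕ) + 1 := by
        rw [show (((k : ℕ) : ℂ) + 1) = ((((k : ℕ) : ℝ) + 1 : ℝ) : ℂ) by push_cast; ring,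
          Complex.norm_real]
        exact abs_of_nonneg (by positivity)
      rw [habs] at this
      have hkN : ((k : ℕ) : ℝ) + 1 ≤ (N : ℝ) := by
        have := k.isLt
        exact_mod_cast Nat.succ_le_of_lt this
      linarith
end
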